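/- For all reals β* > c_β > 0, Δ > 0, and C_θ > 0 there exists a constant K > 0, depending only on β*, c_β, Δ, and C_θ, with the following property. Let T ≥ 2 be an integer, g_o ≥ 1 real, S a nonempty finite set, and for each a ∈ S and t ∈ {1,…,T} let w_a^t ∈ [1, g_o] be real; set n_a^t := ⌊w_a^t⌋, V_a^0 := 1, V_a^t := 1 + Σ_{j=1}^{t} n_a^j (w_a^j)², and γ_a^t := C_θ + sqrt(2 ln T + 2 ln V_a^{t−1}). Suppose β^1, …, β^T are reals satisfying, for every t, |β^t − β*| ≤ min{ β* − c_β, (β* g_o / Δ) · Σ_{a∈S} (2γ_a^t / sqrt(V_a^{t−1})) · w_a^t }. Then Σ_{t=1}^{T} |β^t − β*| ≤ K · g_o · |S| · sqrt(T) · ln(T·g_o). -/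

import Mathlib

private lemma min_one_le_two_log {y : ℝ} (hy : 0 ≤ y) : min 1 y ≤ 2 * Real.log (1 + y) := by
  have h1 : (0:ℝ) < 1 + y := by linarith
  have hlog : 1 - (1 + y)⁻¹ ≤ Real.log (1 + y) := Real.one_sub_inv_le_log_of_pos h1
  have h2 : min 1 y ≤ 2 * (1 - (1 + y)⁻¹) := by
    have hinv : (1 + y)⁻¹ = 1 / (1 + y) := by ring
    rw [hinv]
    rcases le_total y 1 with h | h
    · rw [min_eq_right h]
      rw [show (2:ℝ) * (1 - 1/(1+y)) = 2 * y / (1 + y) by field_simp; ring]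
      rw [le_div_iff₀ h1]
      nlinarith
    · rw [min_eq_left h]
      rw [show (2:ℝ) * (1 - 1/(1+y)) = 2 * y / (1 + y) by field_simp; ring]
      rw [le_div_iff₀ h1]
      nlinarith
  linarith

private lemma sum_sqrt_le_sqrt_card_mul (s : Finset ℕ) (u : ℕ → ℝ) (hu : ∀ t ∈ s, 0 ≤ u t) :
    ∑ t ∈ s, Real.sqrt (u t) ≤ Real.sqrt s.card * Real.sqrt (∑ t ∈ s, u t) := by
  have h := sq_sum_le_card_mul_sum_sq (s := s) (f := fun t => Real.sqrt (u t))
  have h2 : ∑ t ∈ s, Real.sqrt (u t) ^ 2 = ∑ t ∈ s, u t :=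
    Finset.sum_congr rfl fun t ht => Real.sq_sqrt (hu t ht)
  rw [h2] at h
  have h3 : ∑ t ∈ s, Real.sqrt (u t) =
      Real.sqrt ((∑ t ∈ s, Real.sqrt (u t)) ^ 2) := by
    rw [Real.sqrt_sq (Finset.sum_nonneg fun t _ => Real.sqrt_nonneg _)]
  rw [h3, ← Real.sqrt_mul (Nat.cast_nonneg _ : (0:ℝ) ≤ (s.card : ℝ))]
  exact Real.sqrt_le_sqrt h

private lemma elliptic_potential (T : ℕ) (f c : ℕ → ℝ) (h1 : ∀ t, 1 ≤ f t)
    (hc : ∀ t, 0 ≤ c t) (hstep : ∀ t, f (t + 1) = f t + c (t + 1)) (hf0 : f 0 = 1) :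
    ∑ t ∈ Finset.Icc 1 T, min 1 (c t / f (t - 1)) ≤ 2 * Real.log (f T) := by
  induction T with
  | zero => simp [hf0]
  | succ T ih =>
    rw [Finset.sum_Icc_succ_top (by omega : 1 ≤ T + 1)]
    have hfT : 0 < f T := lt_of_lt_of_le one_pos (h1 T)
    have hfT1 : 0 < f (T + 1) := lt_of_lt_of_le one_pos (h1 (T + 1))
    have hkey : min 1 (c (T + 1) / f (T + 1 - 1)) ≤
        2 * Real.log (f (T + 1)) - 2 * Real.log (f T) := by
      have hTs : T + 1 - 1 = T := by omega
      rw [hTs]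
      have hy : 0 ≤ c (T + 1) / f T := div_nonneg (hc _) hfT.le
      have := min_one_le_two_log hy
      have heq : 1 + c (T + 1) / f T = f (T + 1) / f T := by
        rw [hstep T]; field_simp
      rw [heq, Real.log_div hfT1.ne' hfT.ne'] at this
      linarith
    have hmono : Real.log (f T) ≤ Real.log (f (T + 1)) := by
      apply Real.log_le_log hfT
      rw [hstep T]; linarith [hc (T + 1)]
    linarith

private lemma min_le_sum_min {ι : Type*} (s : Finset ι) (B : ℝ) (hB : 0 ≤ B) (c : ι → ℝ)
    (hc : ∀ i ∈ s, 0 ≤ c i) : min B (∑ i ∈ s, c i) ≤ ∑ i ∈ s, min B (c i) := by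
  by_cases h : ∃ i ∈ s, B ≤ c i
  · obtain ⟨i, hi, hBi⟩ := h
    calc min B (∑ i ∈ s, c i) ≤ B := min_le_left _ _
      _ = min B (c i) := (min_eq_left hBi).symm
      _ ≤ ∑ i ∈ s, min B (c i) :=
        Finset.single_le_sum (fun j hj => le_min hB (hc j hj)) hi
  · push_neg at h
    calc min B (∑ i ∈ s, c i) ≤ ∑ i ∈ s, c i := min_le_right _ _
      _ = ∑ i ∈ s, min B (c i) :=
        Finset.sum_congr rfl fun i hi => (min_eq_right (h i hi).le).symm

private lemma min_mul_bound {P Q r : ℝ} (hP : 0 ≤ P) (hQ : 0 ≤ Q) (hr : 0 ≤ r) :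
    min P (Q * r) ≤ (P + Q) * min 1 r := by
  rcases le_total 1 r with h | h
  · rw [min_eq_left h]
    calc min P (Q * r) ≤ P := min_le_left _ _
      _ ≤ (P + Q) * 1 := by linarith
  · rw [min_eq_right h]
    calc min P (Q * r) ≤ Q * r := min_le_right _ _
      _ ≤ (P + Q) * r := by nlinarith

private lemma min_one_sqrt (x : ℝ) : min 1 (Real.sqrt x) = Real.sqrt (min 1 x) := by
  rcases le_total x 1 with h | h
  · rw [min_eq_right h, min_eq_right]
    calc Real.sqrt x ≤ Real.sqrt 1 := Real.sqrt_le_sqrt h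
      _ = 1 := Real.sqrt_one
  · rw [min_eq_left h, min_eq_left, Real.sqrt_one]
    rw [show (1:ℝ) = Real.sqrt 1 from Real.sqrt_one.symm]
    exact Real.sqrt_le_sqrt h

set_option maxHeartbeats 2000000 in
/-- (Lemma 9 of the paper, deterministic form.) For `β* > c_β > 0`,
`Δ > 0`, `C_θ > 0` there is `K > 0` depending only on these such that, with flows
`w_a^t ∈ [1, g_o]`, design sums `V_a^t = 1 + Σ_{j≤t} ⌊w_a^j⌋ (w_a^j)²`, radii
`γ_a^t = C_θ + √(2 ln T + 2 ln V_a^{t−1})`, and entropy-parameter estimates satisfying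
`|β^t − β*| ≤ min{β* − c_β, (β* g_o/Δ) Σ_a (2γ_a^t/√(V_a^{t−1})) w_a^t}`, one has
`Σ_{t=1}^T |β^t − β*| ≤ K g_o |S| √T ln(T g_o)`. -/
theorem stmt_11 (βstar cβ Δ Cθ : ℝ) (hcβ : 0 < cβ) (hβstar : cβ < βstar)
    (hΔ : 0 < Δ) (hCθ : 0 < Cθ) :
    ∃ K : ℝ, 0 < K ∧
      ∀ (T : ℕ), 2 ≤ T → ∀ (go : ℝ), 1 ≤ go → ∀ (n : ℕ), 1 ≤ n →
      ∀ (w : ℕ → Fin n → ℝ),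
        (∀ t ∈ Finset.Icc 1 T, ∀ a, 1 ≤ w t a ∧ w t a ≤ go) →
      ∀ (V : ℕ → Fin n → ℝ),
        (∀ t a, V t a = 1 + ∑ j ∈ Finset.Icc 1 t, (⌊w j a⌋₊ : ℝ) * (w j a) ^ 2) →
      ∀ (γ : ℕ → Fin n → ℝ),
        (∀ t a, γ t a = Cθ + Real.sqrt (2 * Real.log T + 2 * Real.log (V (t - 1) a))) →
      ∀ (β : ℕ → ℝ),
        (∀ t ∈ Finset.Icc 1 T,
          |β t - βstar| ≤ min (βstar - cβ)
            ((βstar * go / Δ) *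
              ∑ a : Fin n, (2 * γ t a / Real.sqrt (V (t - 1) a)) * w t a)) →
      ∑ t ∈ Finset.Icc 1 T, |β t - βstar|
        ≤ K * go * (n : ℝ) * Real.sqrt T * Real.log ((T : ℝ) * go) := by
  have hlog2 : (0:ℝ) < Real.log 2 := Real.log_pos one_lt_two
  set s2 : ℝ := Real.sqrt (Real.log 2) with hs2def
  have hs2 : 0 < s2 := Real.sqrt_pos.mpr hlog2
  set c₁ : ℝ := Cθ / s2 + Real.sqrt 12 with hc₁def
  have hc₁ : 0 < c₁ := by positivity
  set B : ℝ := βstar - cβ with hBdef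
  have hB : 0 < B := by simp only [hBdef]; linarith
  have hβpos : 0 < βstar := lt_trans hcβ hβstar
  refine ⟨Real.sqrt 10 * (B / s2 + 2 * βstar * c₁ / Δ), by positivity, ?_⟩
  intro T hT go hgo n hn w hw V hV γ hγ β hβ
  set L : ℝ := Real.log ((T : ℝ) * go) with hLdef
  have hT2 : (2:ℝ) ≤ (T:ℝ) := by exact_mod_cast hT
  have hTpos : (0:ℝ) < T := by linarith
  have hTgo : (2:ℝ) ≤ (T:ℝ) * go := by nlinarith
  have hL2 : Real.log 2 ≤ L := Real.log_le_log (by norm_num) hTgo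
  have hLpos : 0 < L := lt_of_lt_of_le hlog2 hL2
  set D : ℝ := βstar * go / Δ with hDdef
  have hD : 0 < D := by positivity
  -- basic facts about V
  have hV1 : ∀ t a, 1 ≤ V t a := by
    intro t a
    rw [hV]
    have : (0:ℝ) ≤ ∑ j ∈ Finset.Icc 1 t, (⌊w j a⌋₊ : ℝ) * (w j a) ^ 2 :=
      Finset.sum_nonneg fun j _ => by positivity
    linarith
  have hVmono : ∀ a, ∀ s t : ℕ, s ≤ t → V s a ≤ V t a := by
    intro a s t hst
    rw [hV, hV]
    have hsub : Finset.Icc 1 s ⊆ Finset.Icc 1 t := Finset.Icc_subset_Icc_right hst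
    have := Finset.sum_le_sum_of_subset_of_nonneg
      (f := fun j => (⌊w j a⌋₊ : ℝ) * (w j a) ^ 2) hsub
      (fun j _ _ => by positivity)
    linarith
  -- per-arc bound
  have harc : ∀ a : Fin n,
      ∑ t ∈ Finset.Icc 1 T, min B (D * ((2 * γ t a / Real.sqrt (V (t - 1) a)) * w t a))
        ≤ Real.sqrt 10 * (B / s2 + 2 * βstar * c₁ / Δ) * go * Real.sqrt T * L := by
    intro a
    set c : ℕ → ℝ := fun t => (⌊w t a⌋₊ : ℝ) * (w t a) ^ 2 with hcdef
    have hcnn : ∀ t, 0 ≤ c t := fun t => by positivity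
    -- log of V T is at most 5 L
    have hVTle : V T a ≤ 2 * (T : ℝ) * go ^ 3 := by
      rw [hV]
      have hsum : ∑ j ∈ Finset.Icc 1 T, (⌊w j a⌋₊ : ℝ) * (w j a) ^ 2
          ≤ ∑ j ∈ Finset.Icc 1 T, go ^ 3 := by
        apply Finset.sum_le_sum
        intro j hj
        obtain ⟨hw1, hw2⟩ := hw j hj a
        have hfl : (⌊w j a⌋₊ : ℝ) ≤ w j a := Nat.floor_le (by linarith)
        have hsq : (w j a) ^ 2 ≤ go ^ 2 := by nlinarith
        calc (⌊w j a⌋₊ : ℝ) * (w j a) ^ 2 ≤ go * go ^ 2 :=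
              mul_le_mul (by linarith) hsq (by positivity) (by linarith)
          _ = go ^ 3 := by ring
      rw [Finset.sum_const, Nat.card_Icc] at hsum
      simp only [Nat.add_sub_cancel, nsmul_eq_mul] at hsum
      have hgo3 : (1:ℝ) ≤ go ^ 3 := one_le_pow₀ hgo
      nlinarith
    have hgopos : (0:ℝ) < go := by linarith
    have hloggo : Real.log go ≤ L := by
      apply Real.log_le_log hgopos; nlinarith
    have hlogT : Real.log (T : ℝ) ≤ L := by
      apply Real.log_le_log hTpos; nlinarith
    have hlogVT : Real.log (V T a) ≤ 5 * L := by
      have h1 : Real.log (V T a) ≤ Real.log (2 * (T:ℝ) * go ^ 3) :=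
        Real.log_le_log (by linarith [hV1 T a]) hVTle
      have h2 : Real.log (2 * (T:ℝ) * go ^ 3)
          = Real.log 2 + Real.log (T:ℝ) + 3 * Real.log go := by
        rw [Real.log_mul (by positivity) (by positivity),
          Real.log_mul (by norm_num) (by positivity), Real.log_pow]
        ring
      rw [h2] at h1
      linarith
    have hlogV : ∀ t, t ≤ T → Real.log (V t a) ≤ 5 * L := by
      intro t ht
      calc Real.log (V t a) ≤ Real.log (V T a) :=
            Real.log_le_log (by linarith [hV1 t a]) (hVmono a t T ht)
        _ ≤ 5 * L := hlogVT
    -- γ bound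
    have hγle : ∀ t ∈ Finset.Icc 1 T, γ t a ≤ c₁ * Real.sqrt L := by
      intro t ht
      have htT : t - 1 ≤ T := by
        simp only [Finset.mem_Icc] at ht; omega
      rw [hγ]
      have hargle : 2 * Real.log (T:ℝ) + 2 * Real.log (V (t - 1) a) ≤ 12 * L := by
        have := hlogV (t - 1) htT
        linarith
      have hsq : Real.sqrt (2 * Real.log (T:ℝ) + 2 * Real.log (V (t - 1) a))
          ≤ Real.sqrt 12 * Real.sqrt L := by
        rw [← Real.sqrt_mul (by norm_num : (0:ℝ) ≤ 12)]
        exact Real.sqrt_le_sqrt hargle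
      have hCθle : Cθ ≤ Cθ / s2 * Real.sqrt L := by
        have hsL : s2 ≤ Real.sqrt L := Real.sqrt_le_sqrt hL2
        rw [div_mul_eq_mul_div, le_div_iff₀ hs2]
        nlinarith
      rw [hc₁def]
      nlinarith [Real.sqrt_nonneg L]
    -- pointwise bound
    set Q : ℝ := 2 * D * c₁ * Real.sqrt L with hQdef
    have hQnn : 0 ≤ Q := by positivity
    have hpt : ∀ t ∈ Finset.Icc 1 T,
        min B (D * ((2 * γ t a / Real.sqrt (V (t - 1) a)) * w t a))
          ≤ (B + Q) * Real.sqrt (min 1 (c t / V (t - 1) a)) := by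
      intro t ht
      obtain ⟨hw1, hw2⟩ := hw t ht a
      have hVpos : (0:ℝ) < V (t - 1) a := by linarith [hV1 (t - 1) a]
      have hsVpos : 0 < Real.sqrt (V (t - 1) a) := Real.sqrt_pos.mpr hVpos
      have hγ0 : 0 ≤ γ t a := by
        rw [hγ]; positivity
      have hx2c : (w t a) ^ 2 ≤ c t := by
        have hfl1 : (1:ℝ) ≤ (⌊w t a⌋₊ : ℝ) := by
          have : 1 ≤ ⌊w t a⌋₊ := Nat.le_floor (by exact_mod_cast hw1)
          exact_mod_cast this
        have hceq : c t = (⌊w t a⌋₊ : ℝ) * (w t a) ^ 2 := rfl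
        rw [hceq]
        nlinarith
      have hxsqrt : w t a / Real.sqrt (V (t - 1) a)
          = Real.sqrt ((w t a) ^ 2 / V (t - 1) a) := by
        rw [Real.sqrt_div (by positivity) , Real.sqrt_sq (by linarith)]
      have hstep1 : D * ((2 * γ t a / Real.sqrt (V (t - 1) a)) * w t a)
          ≤ Q * Real.sqrt (c t / V (t - 1) a) := by
        have he : D * ((2 * γ t a / Real.sqrt (V (t - 1) a)) * w t a)
            = 2 * D * γ t a * (w t a / Real.sqrt (V (t - 1) a)) := by ring
        rw [he, hxsqrt, hQdef]
        have h1 : Real.sqrt ((w t a) ^ 2 / V (t - 1) a)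
            ≤ Real.sqrt (c t / V (t - 1) a) :=
          Real.sqrt_le_sqrt (by gcongr)
        have h2 : γ t a ≤ c₁ * Real.sqrt L := hγle t ht
        have hs1 : 0 ≤ Real.sqrt ((w t a) ^ 2 / V (t - 1) a) := Real.sqrt_nonneg _
        have h2D : (0:ℝ) ≤ 2 * D := by linarith
        have h2' : 2 * D * γ t a ≤ 2 * D * (c₁ * Real.sqrt L) :=
          mul_le_mul_of_nonneg_left h2 h2D
        have hmul := mul_le_mul h2' h1 hs1
          (mul_nonneg h2D (mul_nonneg hc₁.le (Real.sqrt_nonneg L)))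
        have heq2 : 2 * D * (c₁ * Real.sqrt L) * Real.sqrt (c t / V (t - 1) a)
            = 2 * D * c₁ * Real.sqrt L * Real.sqrt (c t / V (t - 1) a) := by ring
        linarith
      calc min B (D * ((2 * γ t a / Real.sqrt (V (t - 1) a)) * w t a))
          ≤ min B (Q * Real.sqrt (c t / V (t - 1) a)) := min_le_min le_rfl hstep1
        _ ≤ (B + Q) * min 1 (Real.sqrt (c t / V (t - 1) a)) :=
            min_mul_bound hB.le hQnn (Real.sqrt_nonneg _)
        _ = (B + Q) * Real.sqrt (min 1 (c t / V (t - 1) a)) := by rw [min_one_sqrt]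
    -- sum and elliptic potential
    have hell : ∑ t ∈ Finset.Icc 1 T, min 1 (c t / V (t - 1) a) ≤ 2 * Real.log (V T a) := by
      apply elliptic_potential T (fun t => V t a) c (fun t => hV1 t a) hcnn
      · intro t
        rw [hV, hV, Finset.sum_Icc_succ_top (by omega : 1 ≤ t + 1)]
        ring
      · rw [hV]; simp
    have hsum10 : ∑ t ∈ Finset.Icc 1 T, min 1 (c t / V (t - 1) a) ≤ 10 * L := by
      linarith [hlogVT]
    have hCS : ∑ t ∈ Finset.Icc 1 T, Real.sqrt (min 1 (c t / V (t - 1) a))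
        ≤ Real.sqrt T * Real.sqrt (10 * L) := by
      have h1 := sum_sqrt_le_sqrt_card_mul (Finset.Icc 1 T)
        (fun t => min 1 (c t / V (t - 1) a))
        (fun t _ => le_min zero_le_one (div_nonneg (hcnn t) (by linarith [hV1 (t-1) a])))
      have hcard : ((Finset.Icc 1 T).card : ℝ) = (T : ℝ) := by
        rw [Nat.card_Icc]; simp
      rw [hcard] at h1
      calc ∑ t ∈ Finset.Icc 1 T, Real.sqrt (min 1 (c t / V (t - 1) a))
          ≤ Real.sqrt T * Real.sqrt (∑ t ∈ Finset.Icc 1 T, min 1 (c t / V (t - 1) a)) := h1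
        _ ≤ Real.sqrt T * Real.sqrt (10 * L) :=
            mul_le_mul_of_nonneg_left (Real.sqrt_le_sqrt hsum10) (Real.sqrt_nonneg _)
    -- combine
    have hsumpt : ∑ t ∈ Finset.Icc 1 T,
        min B (D * ((2 * γ t a / Real.sqrt (V (t - 1) a)) * w t a))
        ≤ (B + Q) * (Real.sqrt T * Real.sqrt (10 * L)) := by
      calc ∑ t ∈ Finset.Icc 1 T,
          min B (D * ((2 * γ t a / Real.sqrt (V (t - 1) a)) * w t a))
          ≤ ∑ t ∈ Finset.Icc 1 T, (B + Q) * Real.sqrt (min 1 (c t / V (t - 1) a)) :=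
            Finset.sum_le_sum hpt
        _ = (B + Q) * ∑ t ∈ Finset.Icc 1 T, Real.sqrt (min 1 (c t / V (t - 1) a)) :=
            (Finset.mul_sum _ _ _).symm
        _ ≤ (B + Q) * (Real.sqrt T * Real.sqrt (10 * L)) := by
            apply mul_le_mul_of_nonneg_left hCS (by positivity)
    -- final algebra for this arc
    refine le_trans hsumpt ?_
    set sL : ℝ := Real.sqrt L with hsLdef
    set sT : ℝ := Real.sqrt (T:ℝ) with hsTdef
    have hsLnn : 0 ≤ sL := Real.sqrt_nonneg _
    have hsTnn : 0 ≤ sT := Real.sqrt_nonneg _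
    have hLsq : sL * sL = L := Real.mul_self_sqrt hLpos.le
    have hsLge : s2 ≤ sL := Real.sqrt_le_sqrt hL2
    have h10 : Real.sqrt (10 * L) = Real.sqrt 10 * sL :=
      Real.sqrt_mul (by norm_num) L
    rw [h10, hQdef, hDdef]
    have hexp : (B + 2 * (βstar * go / Δ) * c₁ * sL) * (sT * (Real.sqrt 10 * sL))
        = Real.sqrt 10 * sT * (B * sL) + Real.sqrt 10 * sT * (2 * (βstar * go / Δ) * c₁) * (sL * sL) := by
      ring
    rw [hexp, hLsq]
    have hBL : B * sL ≤ B / s2 * L * go := by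
      have h1 : B * sL * s2 ≤ B * L := by
        calc B * sL * s2 ≤ B * sL * sL := by
              apply mul_le_mul_of_nonneg_left hsLge (by positivity)
          _ = B * L := by rw [mul_assoc, hLsq]
      have h2 : B * sL ≤ B / s2 * L := by
        rw [div_mul_eq_mul_div, le_div_iff₀ hs2]; linarith
      calc B * sL ≤ B / s2 * L := h2
        _ ≤ B / s2 * L * go := le_mul_of_one_le_right (by positivity) hgo
    have hRHS : Real.sqrt 10 * (B / s2 + 2 * βstar * c₁ / Δ) * go * sT * L
        = Real.sqrt 10 * sT * (B / s2 * L * go)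
          + Real.sqrt 10 * sT * (2 * (βstar * go / Δ) * c₁) * L := by
      field_simp
    rw [hRHS]
    have := mul_le_mul_of_nonneg_left hBL (by positivity : (0:ℝ) ≤ Real.sqrt 10 * sT)
    linarith
  -- assemble over all arcs
  have hmain : ∑ t ∈ Finset.Icc 1 T, |β t - βstar|
      ≤ ∑ a : Fin n, ∑ t ∈ Finset.Icc 1 T,
          min B (D * ((2 * γ t a / Real.sqrt (V (t - 1) a)) * w t a)) := by
    rw [Finset.sum_comm]
    apply Finset.sum_le_sum
    intro t ht
    have htermnn : ∀ a : Fin n, (0:ℝ) ≤ D * ((2 * γ t a / Real.sqrt (V (t - 1) a)) * w t a) := by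
      intro a
      obtain ⟨hw1, _⟩ := hw t ht a
      have hγ0 : 0 ≤ γ t a := by rw [hγ]; positivity
      have : 0 ≤ Real.sqrt (V (t-1) a) := Real.sqrt_nonneg _
      positivity
    calc |β t - βstar|
        ≤ min B (D * ∑ a : Fin n, (2 * γ t a / Real.sqrt (V (t - 1) a)) * w t a) := hβ t ht
      _ = min B (∑ a : Fin n, D * ((2 * γ t a / Real.sqrt (V (t - 1) a)) * w t a)) := by
          rw [Finset.mul_sum]
      _ ≤ ∑ a : Fin n, min B (D * ((2 * γ t a / Real.sqrt (V (t - 1) a)) * w t a)) :=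
          min_le_sum_min _ B hB.le _ (fun a _ => htermnn a)
  calc ∑ t ∈ Finset.Icc 1 T, |β t - βstar|
      ≤ ∑ a : Fin n, ∑ t ∈ Finset.Icc 1 T,
          min B (D * ((2 * γ t a / Real.sqrt (V (t - 1) a)) * w t a)) := hmain
    _ ≤ ∑ a : Fin n, Real.sqrt 10 * (B / s2 + 2 * βstar * c₁ / Δ) * go * Real.sqrt T * L :=
        Finset.sum_le_sum fun a _ => harc a
    _ = Real.sqrt 10 * (B / s2 + 2 * βstar * c₁ / Δ) * go * (n : ℝ) * Real.sqrt T * L := by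
        rw [Finset.sum_const, Finset.card_univ, Fintype.card_fin]
        ring
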